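/- Let $k$ be a field of characteristic $\neq 2$. Then for any $r \geq 1$, the Pfister form $\langle\langle x_1, \ldots, x_r \rangle\rangle$ is anisotropic over $k(x_1, \ldots, x_r)$. -/

import Mathlib

/-- A diagonal quadratic form (given by its diagonal entries `d`) is anisotropic. -/
def Anisotropic {F : Type*} [Field F] {ι : Type*} [Fintype ι] (d : ι → F) : Prop :=
  ∀ w : ι → F, ∑ i, d i * w i ^ 2 = 0 → w = 0

section DescentPart

open Polynomial

/-- If `a = X * b` then the degree of `b` is at most that of `a`,
strictly smaller when `a ≠ 0`. -/
lemma natDegree_of_X_mul {A : Type*} [CommRing A] [IsDomain A] {a b : Polynomial A}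
    (h : a = X * b) : b.natDegree ≤ a.natDegree ∧ (a ≠ 0 → b.natDegree < a.natDegree) := by
  rcases eq_or_ne b 0 with hb | hb
  · subst hb; simp at h; subst h; simp
  · have ha : a ≠ 0 := by
      rw [h]; exact mul_ne_zero X_ne_zero hb
    have : a.natDegree = 1 + b.natDegree := by
      rw [h, natDegree_mul X_ne_zero hb, natDegree_X]
    omega

/-- Descent step: if the diagonal form `d` is anisotropic over a domain `A`
(in the polynomial sense), then `d ⊥ X·d` is anisotropic over `A[X]`. -/
lemma descent {A : Type*} [CommRing A] [IsDomain A] {ι : Type*} [Fintype ι] {d : ι → A}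
    (hd : ∀ w : ι → A, ∑ i, d i * w i ^ 2 = 0 → ∀ i, w i = 0) :
    ∀ (N : ℕ) (p q : ι → Polynomial A),
      (∑ i, ((p i).natDegree + (q i).natDegree)) ≤ N →
      (∑ i, C (d i) * p i ^ 2) + X * (∑ i, C (d i) * q i ^ 2) = 0 →
      ∀ i, p i = 0 ∧ q i = 0 := by
  intro N
  induction N using Nat.strong_induction_on with
  | _ N IH =>
  intro p q hdeg heq
  by_cases htriv : ∀ i, p i = 0 ∧ q i = 0
  · exact htriv
  -- evaluate at 0 : constant coefficients of p vanish
  have h0 : ∑ i, d i * (eval 0 (p i)) ^ 2 = 0 := by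
    have := congrArg (eval 0) heq
    simpa [eval_finset_sum] using this
  have hXp : ∀ i, X ∣ p i := fun i => by
    rw [X_dvd_iff, coeff_zero_eq_eval_zero]
    exact hd _ h0 i
  choose p' hp' using hXp
  have hp' : ∀ i, p i = X * p' i := fun i => (hp' i).symm ▸ (hp' i)
  have e1 : (∑ i, C (d i) * p i ^ 2) = X ^ 2 * ∑ i, C (d i) * p' i ^ 2 := by
    rw [Finset.mul_sum]
    exact Finset.sum_congr rfl fun i _ => by rw [hp' i]; ring
  -- cancel one X
  have heq2 : X * (∑ i, C (d i) * q i ^ 2) + X ^ 2 * (∑ i, C (d i) * p' i ^ 2) = 0 := by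
    rw [← e1]; linear_combination heq
  have heq3 : (∑ i, C (d i) * q i ^ 2) + X * (∑ i, C (d i) * p' i ^ 2) = 0 := by
    have : X * ((∑ i, C (d i) * q i ^ 2) + X * (∑ i, C (d i) * p' i ^ 2)) = 0 := by
      linear_combination heq2
    exact (mul_eq_zero.mp this).resolve_left X_ne_zero
  -- constant coefficients of q vanish
  have h0q : ∑ i, d i * (eval 0 (q i)) ^ 2 = 0 := by
    have := congrArg (eval 0) heq3
    simpa [eval_finset_sum] using this
  have hXq : ∀ i, X ∣ q i := fun i => by
    rw [X_dvd_iff, coeff_zero_eq_eval_zero]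
    exact hd _ h0q i
  choose q' hq' using hXq
  have hq' : ∀ i, q i = X * q' i := fun i => (hq' i).symm ▸ (hq' i)
  have e2 : (∑ i, C (d i) * q i ^ 2) = X ^ 2 * ∑ i, C (d i) * q' i ^ 2 := by
    rw [Finset.mul_sum]
    exact Finset.sum_congr rfl fun i _ => by rw [hq' i]; ring
  have heq4 : (∑ i, C (d i) * p' i ^ 2) + X * (∑ i, C (d i) * q' i ^ 2) = 0 := by
    have : X * ((∑ i, C (d i) * p' i ^ 2) + X * (∑ i, C (d i) * q' i ^ 2)) = 0 := by
      rw [e2] at heq3; linear_combination heq3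
    exact (mul_eq_zero.mp this).resolve_left X_ne_zero
  -- degree decreases strictly
  push_neg at htriv
  obtain ⟨i₀, hi₀⟩ := htriv
  have hlt : (∑ i, ((p' i).natDegree + (q' i).natDegree)) <
      (∑ i, ((p i).natDegree + (q i).natDegree)) := by
    apply Finset.sum_lt_sum
    · intro i _
      have h1 := (natDegree_of_X_mul (hp' i)).1
      have h2 := (natDegree_of_X_mul (hq' i)).1
      omega
    · refine ⟨i₀, Finset.mem_univ _, ?_⟩
      by_cases h : p i₀ = 0
      · have := (natDegree_of_X_mul (hq' i₀)).2 (hi₀ h)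
        have := (natDegree_of_X_mul (hp' i₀)).1
        omega
      · have := (natDegree_of_X_mul (hp' i₀)).2 h
        have := (natDegree_of_X_mul (hq' i₀)).1
        omega
  have hNpos : (∑ i, ((p' i).natDegree + (q' i).natDegree)) < N := lt_of_lt_of_le hlt hdeg
  have hres := IH _ hNpos p' q' le_rfl heq4
  intro i
  refine ⟨?_, ?_⟩
  · rw [hp' i, (hres i).1, mul_zero]
  · rw [hq' i, (hres i).2, mul_zero]
end DescentPart

section KeyPart

open MvPolynomial

lemma filter_succ_map {n : ℕ} (S : Finset (Fin n)) :
    (Finset.univ.filter (fun j : Fin n => j.succ ∈ S.map (Fin.succEmb n))) = S := by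
  ext j
  simp [Fin.succEmb, Fin.succ_injective n |>.eq_iff]

lemma map_filter_succ {n : ℕ} (T : Finset (Fin (n+1))) (h0 : (0 : Fin (n+1)) ∉ T) :
    (Finset.univ.filter (fun j : Fin n => j.succ ∈ T)).map (Fin.succEmb n) = T := by
  ext i
  simp only [Finset.mem_map, Finset.mem_filter, Finset.mem_univ, true_and, Fin.succEmb]
  constructor
  · rintro ⟨j, hj, rfl⟩; exact hj
  · intro hi
    have hne : i ≠ 0 := fun h => h0 (h ▸ hi)
    obtain ⟨j, rfl⟩ := Fin.exists_succ_eq.mpr hne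
    exact ⟨j, hi, rfl⟩

lemma zero_not_mem_map_succ {n : ℕ} (S : Finset (Fin n)) :
    (0 : Fin (n+1)) ∉ S.map (Fin.succEmb n) := by
  simp [Fin.succEmb, Fin.succ_ne_zero]

/-- The equivalence between pairs of subsets of `Fin n` and subsets of `Fin (n+1)`. -/
def finsetSuccEquiv (n : ℕ) : Finset (Fin n) ⊕ Finset (Fin n) ≃ Finset (Fin (n+1)) where
  toFun := Sum.elim (fun S => S.map (Fin.succEmb n))
    (fun S => insert 0 (S.map (Fin.succEmb n)))
  invFun T := if (0 : Fin (n+1)) ∈ T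
    then Sum.inr (Finset.univ.filter (fun j : Fin n => j.succ ∈ T))
    else Sum.inl (Finset.univ.filter (fun j : Fin n => j.succ ∈ T))
  left_inv := by
    rintro (S | S) <;> dsimp only [Sum.elim_inl, Sum.elim_inr]
    · rw [if_neg (zero_not_mem_map_succ S), filter_succ_map]
    · rw [if_pos (Finset.mem_insert_self _ _)]
      congr 1
      have : (Finset.univ.filter (fun j : Fin n => j.succ ∈ insert 0 (S.map (Fin.succEmb n))))
          = Finset.univ.filter (fun j : Fin n => j.succ ∈ S.map (Fin.succEmb n)) := by
        apply Finset.filter_congr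
        intro j _
        simp [Fin.succ_ne_zero]
      rw [this, filter_succ_map]
  right_inv := by
    intro T
    dsimp only
    by_cases h0 : (0 : Fin (n+1)) ∈ T
    · rw [if_pos h0, Sum.elim_inr]
      have := map_filter_succ (T.erase 0) (Finset.notMem_erase 0 T)
      have hfilter : (Finset.univ.filter (fun j : Fin n => j.succ ∈ T))
          = Finset.univ.filter (fun j : Fin n => j.succ ∈ T.erase 0) := by
        apply Finset.filter_congr
        intro j _
        simp [Finset.mem_erase, Fin.succ_ne_zero]
      rw [hfilter, this, Finset.insert_erase h0]
    · rw [if_neg h0, Sum.elim_inl, map_filter_succ T h0]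

lemma descent' {A : Type*} [CommRing A] [IsDomain A] {ι : Type*} [Fintype ι] {d : ι → A}
    (hd : ∀ w : ι → A, ∑ i, d i * w i ^ 2 = 0 → ∀ i, w i = 0)
    (p q : ι → Polynomial A)
    (heq : (∑ i, Polynomial.C (d i) * p i ^ 2) + Polynomial.X * (∑ i, Polynomial.C (d i) * q i ^ 2) = 0) :
    ∀ i, p i = 0 ∧ q i = 0 :=
  descent hd (∑ i, ((p i).natDegree + (q i).natDegree)) p q le_rfl heq

/-- Polynomial-level anisotropy of the Pfister form. -/
lemma poly_key (k : Type*) [Field k] :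
    ∀ (n : ℕ) (f : Finset (Fin n) → MvPolynomial (Fin n) k),
      (∑ S : Finset (Fin n), (∏ i ∈ S, X i) * f S ^ 2) = 0 → ∀ S, f S = 0 := by
  intro n
  induction n with
  | zero =>
    intro f h S
    have hsub : Subsingleton (Finset (Fin 0)) :=
      ⟨fun a b => by ext i; exact i.elim0⟩
    have hS : S = (∅ : Finset (Fin 0)) := Subsingleton.elim _ _
    rw [Fintype.sum_subsingleton _ (∅ : Finset (Fin 0))] at h
    simp only [Finset.prod_empty, one_mul, pow_eq_zero_iff, OfNat.ofNat_ne_zero,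
      ne_eq, not_false_eq_true] at h
    rwa [hS]
  | succ n ih =>
    intro f h T
    set φ := finSuccEquiv k n with hφ
    have h2 : ∑ T : Finset (Fin (n+1)), (∏ i ∈ T, φ (X i)) * (φ (f T)) ^ 2 = 0 := by
      have := congrArg φ h
      simpa [map_sum, map_mul, map_pow, map_prod] using this
    set g : Finset (Fin n) → Polynomial (MvPolynomial (Fin n) k) :=
      fun S => φ (f (S.map (Fin.succEmb n))) with hg
    set q : Finset (Fin n) → Polynomial (MvPolynomial (Fin n) k) :=
      fun S => φ (f (insert 0 (S.map (Fin.succEmb n)))) with hq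
    have hprod : ∀ S : Finset (Fin n),
        (∏ i ∈ S.map (Fin.succEmb n), φ (X i)) = Polynomial.C (∏ i ∈ S, X i) := by
      intro S
      rw [Finset.prod_map, map_prod]
      exact Finset.prod_congr rfl fun j _ => by
        simp [Fin.succEmb, hφ, finSuccEquiv_X_succ]
    have h3 : (∑ S : Finset (Fin n), Polynomial.C (∏ i ∈ S, X i) * g S ^ 2)
        + Polynomial.X * (∑ S : Finset (Fin n), Polynomial.C (∏ i ∈ S, X i) * q S ^ 2) = 0 := by
      rw [← h2]
      rw [← Fintype.sum_equiv (finsetSuccEquiv n)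
        (fun x => Sum.elim
          (fun S => Polynomial.C (∏ i ∈ S, X i) * g S ^ 2)
          (fun S => (Polynomial.X * Polynomial.C (∏ i ∈ S, X i)) * q S ^ 2) x)
        (fun T => (∏ i ∈ T, φ (X i)) * (φ (f T)) ^ 2) ?_]
      · rw [Fintype.sum_sum_type]
        simp only [Sum.elim_inl, Sum.elim_inr, Finset.mul_sum]
        refine congrArg₂ (· + ·) rfl ?_
        exact Finset.sum_congr rfl fun S _ => by ring
      · rintro (S | S) <;>
          dsimp only [Sum.elim_inl, Sum.elim_inr, finsetSuccEquiv, Equiv.coe_fn_mk]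
        · rw [hprod S]
        · rw [Finset.prod_insert (zero_not_mem_map_succ S), hprod S,
            finSuccEquiv_X_zero]
    have hres := descent' ih g q h3
    obtain ⟨x, hx⟩ := (finsetSuccEquiv n).surjective T
    have hinj : Function.Injective φ := φ.injective
    rcases x with S | S
    · have : g S = 0 := (hres S).1
      have : φ (f T) = 0 := by rw [← hx]; exact this
      exact hinj (by rw [this, map_zero])
    · have : q S = 0 := (hres S).2
      have : φ (f T) = 0 := by rw [← hx]; exact this
      exact hinj (by rw [this, map_zero])

end KeyPart

/-- for `k` of characteristic `≠ 2` and `r ≥ 1`, the Pfister form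
`⟨⟨x₁, …, x_r⟩⟩`, with diagonal entries `∏_{i ∈ S} x_i` for `S ⊆ {1, …, r}`,
is anisotropic over `k(x₁, …, x_r)`. -/
theorem pfister_form_anisotropic_over_rational_function_field
    {k : Type*} [Field k] (hk : (2 : k) ≠ 0) (r : ℕ) (hr : 1 ≤ r) :
    Anisotropic (fun S : Finset (Fin r) =>
      ∏ i ∈ S, algebraMap (MvPolynomial (Fin r) k)
        (FractionRing (MvPolynomial (Fin r) k)) (MvPolynomial.X i)) := by
  classical
  set R := MvPolynomial (Fin r) k
  set F := FractionRing R
  intro w h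
  obtain ⟨b, hb⟩ := IsLocalization.exist_integer_multiples
    (nonZeroDivisors R) Finset.univ w
  choose a ha using fun S : Finset (Fin r) => hb S (Finset.mem_univ S)
  have hbne : algebraMap R F (b : R) ≠ 0 := by
    intro hc
    exact nonZeroDivisors.coe_ne_zero b ((map_eq_zero_iff _ (IsFractionRing.injective R F)).mp hc)
  have key : algebraMap R F (∑ S : Finset (Fin r), (∏ i ∈ S, MvPolynomial.X i) * a S ^ 2) = 0 := by
    rw [map_sum]
    have : ∀ S : Finset (Fin r),
        algebraMap R F ((∏ i ∈ S, MvPolynomial.X i) * a S ^ 2)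
          = (algebraMap R F (b : R)) ^ 2
            * ((∏ i ∈ S, algebraMap R F (MvPolynomial.X i)) * w S ^ 2) := by
      intro S
      rw [map_mul, map_pow, ha S, Algebra.smul_def, map_prod]
      ring
    rw [Finset.sum_congr rfl fun S _ => this S, ← Finset.mul_sum, h, mul_zero]
  have hzero : (∑ S : Finset (Fin r), (∏ i ∈ S, MvPolynomial.X i) * a S ^ 2) = 0 :=
    (map_eq_zero_iff _ (IsFractionRing.injective R F)).mp key
  have ha0 := poly_key k r a hzero
  funext S
  have : algebraMap R F (b : R) * w S = 0 := by
    rw [← Algebra.smul_def, ← ha S, ha0 S, map_zero]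
  have := (mul_eq_zero.mp this).resolve_left hbne
  simpa using this
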